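/- Let G be a finite group, α an automorphism of G, and M, U two subgroups of G with M ∩ U = {1} such that the set P = {m·u : m ∈ M, u ∈ U} is a subgroup of G. Let φ : M → ℂ and let φ̃ : G → ℂ be its extension defined by φ̃(m·u) = φ(m) for m ∈ M, u ∈ U, and φ̃(g) = 0 for g ∉ P. Define Ind(φ) : G → ℂ by Ind(φ)(g) = (1/|P|) · ∑ φ(m), the sum running over all triples (x, m, u) ∈ G × M × U with g = α(x)⁻¹ · m · u · x. Then: (a) for all g ∈ G, Ind(φ)(g) = (1/|P|) · ∑_{x ∈ G} φ̃(α(x) · g · x⁻¹); and (b) the function Ind(φ) − (|G|/|P|)·φ̃ lies in the linear span of the functions of the form g ↦ f(α(x) · g · x⁻¹) − f(g), where x ranges over G and f over all functions G → ℂ. -/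

import Mathlib

theorem stmt_19 {G : Type*} [Group G] [Fintype G] [DecidableEq G]
    (α : G ≃* G) (M U : Subgroup G)
    [DecidablePred (· ∈ M)] [DecidablePred (· ∈ U)]
    (hMU : M ⊓ U = ⊥)
    (P : Subgroup G) (hP : (P : Set G) = {g : G | ∃ m ∈ M, ∃ u ∈ U, g = m * u})
    (φ : M → ℂ) (phiT : G → ℂ)
    (hphiT1 : ∀ (m : M) (u : U), phiT ((m : G) * (u : G)) = φ m)
    (hphiT0 : ∀ g : G, g ∉ P → phiT g = 0) :
    (∀ g : G,
      (1 / (Nat.card P : ℂ)) *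
          ∑ t ∈ Finset.univ.filter
            (fun t : G × M × U => g = (α t.1)⁻¹ * (t.2.1 : G) * (t.2.2 : G) * t.1),
            φ t.2.1
        = (1 / (Nat.card P : ℂ)) * ∑ x : G, phiT (α x * g * x⁻¹)) ∧
    ((fun g : G =>
        (1 / (Nat.card P : ℂ)) *
          ∑ t ∈ Finset.univ.filter
            (fun t : G × M × U => g = (α t.1)⁻¹ * (t.2.1 : G) * (t.2.2 : G) * t.1),
            φ t.2.1)
        - ((Nat.card G : ℂ) / (Nat.card P : ℂ)) • phiT)
      ∈ Submodule.span ℂ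
          {ψ : G → ℂ | ∃ (x : G) (f : G → ℂ), ψ = fun g => f (α x * g * x⁻¹) - f g} := by
  classical
  -- key: for any h, the sum over pairs (m,u) with h = m*u of φ m equals phiT h
  have key : ∀ h : G,
      (∑ p ∈ Finset.univ.filter (fun p : M × U => h = (p.1 : G) * (p.2 : G)), φ p.1)
        = phiT h := by
    intro h
    by_cases hp : h ∈ P
    · have hp' : h ∈ (P : Set G) := hp
      rw [hP] at hp'
      obtain ⟨m, hm, u, hu, rfl⟩ := hp'
      have hfil : Finset.univ.filter
          (fun p : M × U => m * u = (p.1 : G) * (p.2 : G))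
          = {(⟨m, hm⟩, ⟨u, hu⟩)} := by
        ext ⟨⟨m', hm'⟩, ⟨u', hu'⟩⟩
        simp only [Finset.mem_filter, Finset.mem_univ, true_and, Finset.mem_singleton,
          Prod.mk.injEq, Subtype.mk.injEq]
        constructor
        · intro he
          have h1 : m'⁻¹ * m = u' * u⁻¹ := by
            have h2 : m'⁻¹ * (m * u) * u⁻¹ = m'⁻¹ * (m' * u') * u⁻¹ := by rw [he]
            simpa [mul_assoc] using h2
          have hMm : m'⁻¹ * m ∈ M := M.mul_mem (M.inv_mem hm') hm
          have hUm : m'⁻¹ * m ∈ U := h1 ▸ U.mul_mem hu' (U.inv_mem hu)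
          have hbot : m'⁻¹ * m ∈ M ⊓ U := ⟨hMm, hUm⟩
          rw [hMU, Subgroup.mem_bot] at hbot
          have hm2 : m' = m := inv_mul_eq_one.mp hbot
          refine ⟨hm2, ?_⟩
          subst hm2
          exact (mul_left_cancel he).symm
        · rintro ⟨rfl, rfl⟩
          rfl
      rw [hfil, Finset.sum_singleton, hphiT1 ⟨m, hm⟩ ⟨u, hu⟩]
    · rw [Finset.filter_false_of_mem, Finset.sum_empty, hphiT0 h hp]
      rintro ⟨m, u⟩ _ he
      exact hp (by
        have : h ∈ (P : Set G) := by rw [hP]; exact ⟨m, m.2, u, u.2, he⟩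
        exact this)
  have main : ∀ g : G,
      (∑ t ∈ Finset.univ.filter
          (fun t : G × M × U => g = (α t.1)⁻¹ * (t.2.1 : G) * (t.2.2 : G) * t.1),
          φ t.2.1)
        = ∑ x : G, phiT (α x * g * x⁻¹) := by
    intro g
    rw [Finset.sum_filter, ← Finset.univ_product_univ, Finset.sum_product]
    refine Finset.sum_congr rfl fun x _ => ?_
    rw [← Finset.sum_filter, ← key (α x * g * x⁻¹)]
    refine Finset.sum_congr ?_ fun _ _ => rfl
    ext p
    simp only [Finset.mem_filter, Finset.mem_univ, true_and]
    constructor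
    · intro h
      rw [h]; group
    · intro h
      rw [show (α x)⁻¹ * (p.1 : G) * (p.2 : G) * x
          = (α x)⁻¹ * ((p.1 : G) * (p.2 : G)) * x by group, ← h]
      group
  refine ⟨fun g => by rw [main g], ?_⟩
  have heq : ((fun g : G =>
        (1 / (Nat.card P : ℂ)) *
          ∑ t ∈ Finset.univ.filter
            (fun t : G × M × U => g = (α t.1)⁻¹ * (t.2.1 : G) * (t.2.2 : G) * t.1),
            φ t.2.1)
        - ((Nat.card G : ℂ) / (Nat.card P : ℂ)) • phiT)
      = (1 / (Nat.card P : ℂ)) • ∑ x : G, (fun g => phiT (α x * g * x⁻¹) - phiT g) := by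
    funext g
    simp only [Pi.sub_apply, Pi.smul_apply, Finset.sum_apply, smul_eq_mul, main g]
    rw [Finset.sum_sub_distrib, Finset.sum_const, Finset.card_univ]
    simp only [Nat.card_eq_fintype_card]
    ring
  rw [heq]
  exact Submodule.smul_mem _ _ (Submodule.sum_mem _ fun x _ =>
    Submodule.subset_span ⟨x, phiT, rfl⟩)
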